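/- Let m ≥ 1 be an integer and p, q real numbers with q ≠ 0, p > 0 and p² > 4(2m+3)q². Set D = √(p² − 4(2m+3)q²) and r₂ = (p − D)/((2m+3)q²). Then there exist a real number τ₀ and differentiable positive functions a, b : (τ₀, ∞) → ℝ solving the ODE system a' = 4 + 2m q² a²/b², b' = 2p − 3q² a/b, such that 0 < a(τ)/b(τ) < r₂ for all τ > τ₀, a/b is strictly increasing, lim_{τ→∞} a(τ)/b(τ) = r₂, lim_{τ→τ₀⁺} a(τ) = 0, and lim_{τ→τ₀⁺} b(τ) exists and is positive. -/

import Mathlib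

open Set Filter MeasureTheory intervalIntegral Topology

lemma invert_T (r : ℝ) (hr : 0 < r) (ψ : ℝ → ℝ)
    (hcont : ContinuousOn ψ (Set.Iio r))
    (hpos : ∀ s ∈ Set.Ico (0:ℝ) r, 0 < ψ s)
    (hdiv : Tendsto (fun s => ∫ t in (0:ℝ)..s, ψ t) (𝓝[<] r) atTop) :
    ∃ S : ℝ → ℝ, (∀ τ ∈ Ioi (0:ℝ), S τ ∈ Set.Ioo 0 r) ∧
      (∀ τ ∈ Ioi (0:ℝ), HasDerivAt S (ψ (S τ))⁻¹ τ) ∧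
      StrictMonoOn S (Set.Ioi 0) ∧
      Tendsto S atTop (𝓝 r) ∧
      Tendsto S (𝓝[>] (0:ℝ)) (𝓝 0) := by
  set T : ℝ → ℝ := fun s => ∫ t in (0:ℝ)..s, ψ t with hTdef
  have hT0 : T 0 = 0 := intervalIntegral.integral_same
  -- integrability
  have hint : ∀ x ∈ Iio r, ∀ y ∈ Iio r, IntervalIntegrable ψ volume x y := by
    intro x hx y hy
    apply ContinuousOn.intervalIntegrable
    apply hcont.mono
    intro t ht
    rcases le_total x y with h | h
    · rw [uIcc_of_le h] at ht; exact lt_of_le_of_lt ht.2 hy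
    · rw [uIcc_of_ge h] at ht; exact lt_of_le_of_lt ht.2 hx
  have h0r : (0:ℝ) ∈ Iio r := hr
  -- derivative of T
  have hT' : ∀ s ∈ Iio r, HasDerivAt T (ψ s) s := by
    intro s hs
    exact integral_hasDerivAt_right (hint 0 h0r s hs)
      ⟨Iio r, Iio_mem_nhds hs, hcont.aestronglyMeasurable measurableSet_Iio⟩
      (hcont.continuousAt (Iio_mem_nhds hs))
  have hTcont : ∀ s ∈ Iio r, ContinuousAt T s := fun s hs => (hT' s hs).continuousAt
  -- strict monotonicity of T on Ico 0 r
  have hTmono : StrictMonoOn T (Ico 0 r) := by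
    intro x hx y hy hxy
    have hxy' : T y - T x = ∫ t in x..y, ψ t := by
      rw [hTdef]
      simp only
      rw [← intervalIntegral.integral_add_adjacent_intervals (hint 0 h0r x hx.2)
        (hint x hx.2 y hy.2)]
      ring
    have hpos' : 0 < ∫ t in x..y, ψ t := by
      apply intervalIntegral.intervalIntegral_pos_of_pos_on (hint x hx.2 y hy.2)
      · intro t ht
        exact hpos t ⟨hx.1.trans ht.1.le, lt_trans ht.2 hy.2⟩
      · exact hxy
    linarith
  have hTmono' : MonotoneOn T (Ico 0 r) := hTmono.monotoneOn
  -- surjectivity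
  have hsurj : ∀ τ : ℝ, 0 < τ → ∃ s ∈ Ioo (0:ℝ) r, T s = τ := by
    intro τ hτ
    obtain ⟨s₂, hs₂, hs₂T⟩ : ∃ s₂ ∈ Ioo (0:ℝ) r, τ < T s₂ := by
      have h1 : ∀ᶠ s in 𝓝[<] r, τ < T s := hdiv.eventually (eventually_gt_atTop τ)
      have h2 : Ioo (0:ℝ) r ∈ 𝓝[<] r := Ioo_mem_nhdsLT_of_mem ⟨hr, le_rfl⟩
      rcases (h1.and (eventually_of_mem h2 (fun x hx => hx))).exists with ⟨s₂, h₁, h₂⟩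
      exact ⟨s₂, h₂, h₁⟩
    have hivt : Ioo (T 0) (T s₂) ⊆ T '' Ioo 0 s₂ := by
      apply intermediate_value_Ioo hs₂.1.le
      intro x hx
      exact (hTcont x (lt_of_le_of_lt hx.2 hs₂.2)).continuousWithinAt
    have : τ ∈ Ioo (T 0) (T s₂) := ⟨by rw [hT0]; exact hτ, hs₂T⟩
    obtain ⟨s, hs, hsT⟩ := hivt this
    exact ⟨s, ⟨hs.1, hs.2.trans hs₂.2⟩, hsT⟩
  classical
  set S : ℝ → ℝ := fun τ => if h : 0 < τ then (hsurj τ h).choose else 0 with hSdef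
  have hS : ∀ τ : ℝ, 0 < τ → S τ ∈ Ioo (0:ℝ) r ∧ T (S τ) = τ := by
    intro τ hτ
    rw [hSdef]
    simp only [dif_pos hτ]
    exact ⟨(hsurj τ hτ).choose_spec.1, (hsurj τ hτ).choose_spec.2⟩
  have hSmem : ∀ τ ∈ Ioi (0:ℝ), S τ ∈ Ioo (0:ℝ) r := fun τ hτ => (hS τ hτ).1
  have hTS : ∀ τ : ℝ, 0 < τ → T (S τ) = τ := fun τ hτ => (hS τ hτ).2
  -- key comparison
  have hcomp : ∀ (x : ℝ), x ∈ Ico (0:ℝ) r → ∀ τ, 0 < τ → (T x < τ ↔ x < S τ) := by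
    intro x hx τ hτ
    constructor
    · intro h
      by_contra hle
      push_neg at hle
      have := hTmono' (Ioo_subset_Ico_self (hSmem τ hτ)) hx hle
      rw [hTS τ hτ] at this
      linarith
    · intro h
      have := hTmono hx (Ioo_subset_Ico_self (hSmem τ hτ)) h
      rw [hTS τ hτ] at this
      exact this
  -- strict monotonicity of S
  have hSmono : StrictMonoOn S (Set.Ioi 0) := by
    intro x hx y hy hxy
    rw [Set.mem_Ioi] at hx hy
    have := (hcomp (S x) (Ioo_subset_Ico_self (hSmem x hx)) y hy).1 (by rw [hTS x hx]; exact hxy)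
    exact this
  -- continuity of S
  have hScont : ∀ τ : ℝ, 0 < τ → ContinuousAt S τ := by
    intro τ hτ
    rw [Metric.continuousAt_iff]
    intro ε hε
    obtain ⟨hs0, hsr⟩ := hSmem τ hτ
    set s := S τ
    set ε' : ℝ := min ε (min s ((r - s) / 2)) with hε'def
    have hε' : 0 < ε' := lt_min hε (lt_min hs0 (by linarith))
    have hl : (0:ℝ) ≤ s - ε' := by
      have : ε' ≤ s := (min_le_right _ _).trans (min_le_left _ _)
      linarith
    have hu : s + ε' < r := by
      have : ε' ≤ (r - s) / 2 := (min_le_right _ _).trans (min_le_right _ _)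
      linarith
    have hlr : s - ε' < r := by linarith
    have h1 : T (s - ε') < τ := by
      rw [← hTS τ hτ]
      exact hTmono ⟨hl, hlr⟩ (Ioo_subset_Ico_self (hSmem τ hτ)) (by linarith)
    have h2 : τ < T (s + ε') := by
      rw [← hTS τ hτ]
      exact hTmono (Ioo_subset_Ico_self (hSmem τ hτ)) ⟨by linarith, hu⟩ (by linarith)
    refine ⟨min (τ - T (s - ε')) (T (s + ε') - τ), lt_min (by linarith) (by linarith), ?_⟩
    intro τ' hτ'
    rw [Real.dist_eq] at hτ' ⊢
    have hτ'l : T (s - ε') < τ' := by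
      have := abs_lt.1 hτ'
      have : -(τ - T (s - ε')) < τ' - τ := lt_of_le_of_lt (by
        have := min_le_left (τ - T (s - ε')) (T (s + ε') - τ); linarith) this.1
      linarith
    have hτ'u : τ' < T (s + ε') := by
      have h := (abs_lt.1 hτ').2
      have : τ' - τ < T (s + ε') - τ :=
        lt_of_lt_of_le h (min_le_right (τ - T (s - ε')) (T (s + ε') - τ))
      linarith
    have hτ'pos : 0 < τ' := by
      have hTl : 0 ≤ T (s - ε') := by
        rcases eq_or_lt_of_le hl with h | h
        · rw [← h, hT0]
        · have := hTmono ⟨le_rfl, hr⟩ ⟨hl, hlr⟩ h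
          rw [hT0] at this; exact this.le
      linarith
    have hlo : s - ε' < S τ' := (hcomp (s - ε') ⟨hl, hlr⟩ τ' hτ'pos).1 hτ'l
    have hhi : S τ' < s + ε' := by
      by_contra hge
      push_neg at hge
      have := hTmono' ⟨by linarith, hu⟩ (Ioo_subset_Ico_self (hSmem τ' hτ'pos)) hge
      rw [hTS τ' hτ'pos] at this
      linarith
    have : |S τ' - s| < ε' := abs_lt.2 ⟨by linarith, by linarith⟩
    exact lt_of_lt_of_le this (min_le_left _ _)
  -- derivative of S
  have hS' : ∀ τ ∈ Ioi (0:ℝ), HasDerivAt S (ψ (S τ))⁻¹ τ := by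
    intro τ hτ
    rw [Set.mem_Ioi] at hτ
    have hmem := hSmem τ hτ
    refine HasDerivAt.of_local_left_inverse (hScont τ hτ) (hT' (S τ) hmem.2) ?_ ?_
    · exact (hpos (S τ) (Ioo_subset_Ico_self hmem)).ne'
    · filter_upwards [Ioi_mem_nhds hτ] with y hy
      exact hTS y hy
  -- tendsto atTop
  have hStop : Tendsto S atTop (𝓝 r) := by
    rw [tendsto_order]
    constructor
    · intro x hx
      set x' : ℝ := max x 0 with hx'def
      have hx' : x' ∈ Ico (0:ℝ) r := ⟨le_max_right _ _, max_lt hx hr⟩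
      filter_upwards [eventually_gt_atTop (max (T x') 0)] with τ hτ
      have hτ0 : 0 < τ := lt_of_le_of_lt (le_max_right _ _) hτ
      have : x' < S τ := (hcomp x' hx' τ hτ0).1 (lt_of_le_of_lt (le_max_left _ _) hτ)
      exact lt_of_le_of_lt (le_max_left x 0) this
    · intro x hx
      filter_upwards [eventually_gt_atTop 0] with τ hτ
      exact (hSmem τ hτ).2.trans hx
  -- tendsto at 0+
  have hSzero : Tendsto S (𝓝[>] (0:ℝ)) (𝓝 0) := by
    rw [tendsto_order]
    constructor
    · intro x hx
      filter_upwards [self_mem_nhdsWithin] with τ hτ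
      exact lt_trans hx (hSmem τ hτ).1
    · intro x hx
      set x' : ℝ := min x (r / 2) with hx'def
      have hx'mem : x' ∈ Ico (0:ℝ) r := ⟨le_min hx.le (by linarith), (min_le_right _ _).trans_lt (by linarith)⟩
      have hx'pos : 0 < x' := lt_min hx (by linarith)
      have hTx' : 0 < T x' := by
        have := hTmono ⟨le_rfl, hr⟩ hx'mem hx'pos
        rw [hT0] at this; exact this
      have hmem : Ioo (0:ℝ) (T x') ∈ 𝓝[>] (0:ℝ) := Ioo_mem_nhdsGT_of_mem ⟨le_rfl, hTx'⟩
      filter_upwards [hmem] with τ hτ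
      have : S τ < x' := by
        by_contra hge
        push_neg at hge
        have := hTmono' hx'mem (Ioo_subset_Ico_self (hSmem τ hτ.1)) hge
        rw [hTS τ hτ.1] at this
        linarith [hτ.2]
      exact this.trans_le (min_le_left _ _)
  exact ⟨S, hSmem, hS', hSmono, hStop, hSzero⟩

lemma rpow_cancel {x : ℝ} (hx : 0 < x) (z : ℝ) : x ^ z * (x ^ (z - 1))⁻¹ = x := by
  rw [← Real.rpow_neg hx.le, ← Real.rpow_add hx]
  have : z + -(z - 1) = 1 := by ring
  rw [this, Real.rpow_one]

lemma min_rpow_le {u v w : ℝ} (hu : 0 < u) (huw : u ≤ w) (hwv : w ≤ v) (z : ℝ) :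
    min (u ^ z) (v ^ z) ≤ w ^ z := by
  rcases le_or_gt 0 z with hz | hz
  · exact le_trans (min_le_left _ _) (Real.rpow_le_rpow hu.le huw hz)
  · exact le_trans (min_le_right _ _)
      (Real.rpow_le_rpow_of_nonpos (hu.trans_le huw) hwv hz.le)

set_option maxHeartbeats 1000000

/-- ODE content of the type-I ancient solution on an SU(2)-bundle over a
quaternion-Kähler manifold which starts at the Einstein metric with `a/b = r₂` (at τ = ∞)
and collapses the SU(2)-fiber (`a → 0` with `b` bounded away from 0) at the singular time. -/
theorem stmt_18 (m : ℕ) (hm : 1 ≤ m) (p q : ℝ) (hq : q ≠ 0) (hp : 0 < p)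
    (hpq : p ^ 2 > 4 * (2 * (m : ℝ) + 3) * q ^ 2)
    (D r₂ : ℝ)
    (hD : D = Real.sqrt (p ^ 2 - 4 * (2 * (m : ℝ) + 3) * q ^ 2))
    (hr₂ : r₂ = (p - D) / ((2 * (m : ℝ) + 3) * q ^ 2)) :
    ∃ (τ₀ : ℝ) (a b : ℝ → ℝ),
      (∀ τ ∈ Set.Ioi τ₀, 0 < a τ ∧ 0 < b τ) ∧
      (∀ τ ∈ Set.Ioi τ₀,
        HasDerivAt a (4 + 2 * (m : ℝ) * q ^ 2 * (a τ) ^ 2 / (b τ) ^ 2) τ) ∧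
      (∀ τ ∈ Set.Ioi τ₀, HasDerivAt b (2 * p - 3 * q ^ 2 * (a τ / b τ)) τ) ∧
      (∀ τ ∈ Set.Ioi τ₀, 0 < a τ / b τ ∧ a τ / b τ < r₂) ∧
      StrictMonoOn (fun τ => a τ / b τ) (Set.Ioi τ₀) ∧
      Filter.Tendsto (fun τ => a τ / b τ) Filter.atTop (nhds r₂) ∧
      Filter.Tendsto a (nhdsWithin τ₀ (Set.Ioi τ₀)) (nhds 0) ∧
      ∃ L : ℝ, 0 < L ∧ Filter.Tendsto b (nhdsWithin τ₀ (Set.Ioi τ₀)) (nhds L) := by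
  have hm' : (1:ℝ) ≤ (m:ℝ) := by exact_mod_cast hm
  obtain ⟨c, hc⟩ : ∃ c : ℝ, c = (2 * (m:ℝ) + 3) * q ^ 2 := ⟨_, rfl⟩
  have hq2 : 0 < q ^ 2 := by positivity
  have hc0 : 0 < c := by rw [hc]; positivity
  have hdisc : 0 < p ^ 2 - 4 * c := by rw [hc]; nlinarith [hpq]
  have hD0 : 0 < D := by
    rw [hD]
    apply Real.sqrt_pos.2
    nlinarith [hpq]
  have hDsq : D ^ 2 = p ^ 2 - 4 * c := by
    rw [hD, sq, Real.mul_self_sqrt (by nlinarith [hpq])]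
    rw [hc]; ring
  have hDp : D < p := by nlinarith
  have hr₂' : r₂ = (p - D) / c := by rw [hr₂, hc]
  obtain ⟨r₁, hr₁⟩ : ∃ r₁ : ℝ, r₁ = (p + D) / c := ⟨_, rfl⟩
  have hr2c : c * r₂ = p - D := by rw [hr₂']; field_simp
  have hr1c : c * r₁ = p + D := by rw [hr₁]; field_simp
  have hr₂pos : 0 < r₂ := by
    rw [hr₂']; exact div_pos (by linarith) hc0
  have hr12 : r₂ < r₁ := by
    rw [hr₂', hr₁, div_lt_div_iff₀ hc0 hc0]
    nlinarith [hD0, hc0]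
  have hr₁pos : 0 < r₁ := lt_trans hr₂pos hr12
  have hdiff : c * r₁ - c * r₂ = 2 * D := by rw [hr1c, hr2c]; ring
  have hfact : ∀ s : ℝ, c * (r₁ - s) * (r₂ - s) = c * s ^ 2 - 2 * p * s + 4 := by
    intro s
    have h4 : c * (r₁ * r₂) = 4 := by
      have h : (c * r₁) * (c * r₂) = 4 * c := by rw [hr1c, hr2c]; nlinarith [hDsq]
      have h2 : c * (c * (r₁ * r₂)) = c * 4 := by nlinarith [h]
      exact mul_left_cancel₀ hc0.ne' h2
    have hsum : c * (r₁ + r₂) = 2 * p := by rw [mul_add, hr1c, hr2c]; ring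
    linear_combination h4 - s * hsum
  have hroot2 : c * r₂ ^ 2 - 2 * p * r₂ + 4 = 0 := by
    have := hfact r₂; nlinarith [this]
  have hg2 : 0 < 2 * p - 3 * q ^ 2 * r₂ := by
    have key : (2 * p - 3 * q ^ 2 * r₂) * r₂ = 2 * (m:ℝ) * q ^ 2 * r₂ ^ 2 + 4 := by
      linear_combination -hroot2 + r₂ ^ 2 * hc
    nlinarith [hr₂pos, hq2, sq_nonneg r₂, hm']
  -- exponents
  obtain ⟨A, hA⟩ : ∃ A : ℝ, A = (2 * p - 3 * q ^ 2 * r₁) / (2 * D) := ⟨_, rfl⟩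
  obtain ⟨Bc, hBc⟩ : ∃ Bc : ℝ, Bc = -((2 * p - 3 * q ^ 2 * r₂) / (2 * D)) := ⟨_, rfl⟩
  have hBcneg : Bc < 0 := by
    rw [hBc, neg_lt, neg_zero]
    exact div_pos hg2 (by linarith)
  -- the functions
  obtain ⟨ψ, hψ⟩ : ∃ ψ : ℝ → ℝ,
      ψ = fun s => c⁻¹ * ((r₁ - s) ^ (A - 1) * (r₂ - s) ^ (Bc - 1)) := ⟨_, rfl⟩
  obtain ⟨Bf, hBfd⟩ : ∃ Bf : ℝ → ℝ,
      Bf = fun s => (r₁ - s) ^ A * (r₂ - s) ^ Bc := ⟨_, rfl⟩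
  have hX : ∀ s ∈ Set.Iio r₂, 0 < r₁ - s := fun s hs => by
    simp only [Set.mem_Iio] at hs; linarith
  have hY : ∀ s ∈ Set.Iio r₂, 0 < r₂ - s := fun s hs => by
    simp only [Set.mem_Iio] at hs; linarith
  have hψval : ∀ s : ℝ, ψ s = c⁻¹ * ((r₁ - s) ^ (A - 1) * (r₂ - s) ^ (Bc - 1)) := by
    intro s; rw [hψ]
  have hBfval : ∀ s : ℝ, Bf s = (r₁ - s) ^ A * (r₂ - s) ^ Bc := by
    intro s; rw [hBfd]
  have hψpos : ∀ s ∈ Set.Iio r₂, 0 < ψ s := by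
    intro s hs
    rw [hψval]
    exact mul_pos (inv_pos.2 hc0)
      (mul_pos (Real.rpow_pos_of_pos (hX s hs) _) (Real.rpow_pos_of_pos (hY s hs) _))
  have hBfpos : ∀ s ∈ Set.Iio r₂, 0 < Bf s := by
    intro s hs
    rw [hBfval]
    exact mul_pos (Real.rpow_pos_of_pos (hX s hs) _) (Real.rpow_pos_of_pos (hY s hs) _)
  have hcontψ : ContinuousOn ψ (Set.Iio r₂) := by
    rw [hψ]
    apply ContinuousOn.mul continuousOn_const
    apply ContinuousOn.mul
    · exact ((continuous_const.sub continuous_id).continuousOn).rpow_const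
        (fun s hs => Or.inl (hX s hs).ne')
    · exact ((continuous_const.sub continuous_id).continuousOn).rpow_const
        (fun s hs => Or.inl (hY s hs).ne')
  -- divergence of the integral
  have hdiv : Tendsto (fun s => ∫ t in (0:ℝ)..s, ψ t) (𝓝[<] r₂) atTop := by
    obtain ⟨k, hk⟩ : ∃ k : ℝ, k = min ((r₁ - r₂) ^ (A - 1)) (r₁ ^ (A - 1)) := ⟨_, rfl⟩
    have hk0 : 0 < k := by
      rw [hk]
      exact lt_min (Real.rpow_pos_of_pos (by linarith) _) (Real.rpow_pos_of_pos hr₁pos _)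
    obtain ⟨K, hK⟩ : ∃ K : ℝ, K = c⁻¹ * k := ⟨_, rfl⟩
    have hK0 : 0 < K := by rw [hK]; exact mul_pos (inv_pos.2 hc0) hk0
    have hlow : ∀ s ∈ Set.Ico (0:ℝ) r₂,
        K * -Bc⁻¹ * ((r₂ - s) ^ Bc - r₂ ^ Bc) ≤ ∫ t in (0:ℝ)..s, ψ t := by
      intro s hs
      have hsr : s < r₂ := hs.2
      have hintg : IntervalIntegrable (fun t => K * (r₂ - t) ^ (Bc - 1)) volume 0 s := by
        apply ContinuousOn.intervalIntegrable
        apply ContinuousOn.mul continuousOn_const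
        apply ((continuous_const.sub continuous_id).continuousOn).rpow_const
        intro t ht
        rw [Set.uIcc_of_le hs.1] at ht
        exact Or.inl (show r₂ - t ≠ 0 by have := ht.2; intro h; nlinarith)
      have hintψ : IntervalIntegrable ψ volume 0 s := by
        apply (hcontψ.mono ?_).intervalIntegrable
        rw [Set.uIcc_of_le hs.1]
        intro t ht
        exact lt_of_le_of_lt ht.2 hsr
      have hmono : ∀ t ∈ Set.Icc (0:ℝ) s, K * (r₂ - t) ^ (Bc - 1) ≤ ψ t := by
        intro t ht
        have htY : 0 < r₂ - t := by have := ht.2; linarith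
        have hbound : k ≤ (r₁ - t) ^ (A - 1) := by
          rw [hk]
          exact min_rpow_le (by linarith) (by have := ht.2; linarith)
            (by have := ht.1; linarith) (A - 1)
        calc K * (r₂ - t) ^ (Bc - 1) = c⁻¹ * (k * (r₂ - t) ^ (Bc - 1)) := by rw [hK]; ring
        _ ≤ c⁻¹ * ((r₁ - t) ^ (A - 1) * (r₂ - t) ^ (Bc - 1)) := by
              apply mul_le_mul_of_nonneg_left ?_ (inv_pos.2 hc0).le
              exact mul_le_mul_of_nonneg_right hbound (Real.rpow_pos_of_pos htY _).le
        _ = ψ t := (hψval t).symm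
      have hle : ∫ t in (0:ℝ)..s, K * (r₂ - t) ^ (Bc - 1) ≤ ∫ t in (0:ℝ)..s, ψ t :=
        intervalIntegral.integral_mono_on hs.1 hintg hintψ hmono
      have heval : ∫ t in (0:ℝ)..s, K * (r₂ - t) ^ (Bc - 1)
          = K * -Bc⁻¹ * ((r₂ - s) ^ Bc - r₂ ^ Bc) := by
        rw [intervalIntegral.integral_const_mul]
        have hF : ∀ t ∈ Set.uIcc (0:ℝ) s,
            HasDerivAt (fun u => -Bc⁻¹ * (r₂ - u) ^ Bc) ((r₂ - t) ^ (Bc - 1)) t := by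
          intro t ht
          rw [Set.uIcc_of_le hs.1] at ht
          have htY : 0 < r₂ - t := by have := ht.2; linarith
          have h1 : HasDerivAt (fun u : ℝ => r₂ - u) (-1) t := (hasDerivAt_id t).const_sub r₂
          have h2 := h1.rpow_const (p := Bc) (Or.inl htY.ne')
          have h3 := h2.const_mul (-Bc⁻¹)
          refine h3.congr_deriv ?_
          rw [show -Bc⁻¹ * (-1 * Bc * (r₂ - t) ^ (Bc - 1))
              = (Bc⁻¹ * Bc) * (r₂ - t) ^ (Bc - 1) from by ring,
            inv_mul_cancel₀ hBcneg.ne, one_mul]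
        have hintg2 : IntervalIntegrable (fun t => (r₂ - t) ^ (Bc - 1)) volume 0 s := by
          apply ContinuousOn.intervalIntegrable
          apply ((continuous_const.sub continuous_id).continuousOn).rpow_const
          intro t ht
          rw [Set.uIcc_of_le hs.1] at ht
          exact Or.inl (show r₂ - t ≠ 0 by have := ht.2; intro h; nlinarith)
        rw [intervalIntegral.integral_eq_sub_of_hasDerivAt hF hintg2]
        ring
      calc K * -Bc⁻¹ * ((r₂ - s) ^ Bc - r₂ ^ Bc)
          = ∫ t in (0:ℝ)..s, K * (r₂ - t) ^ (Bc - 1) := heval.symm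
        _ ≤ ∫ t in (0:ℝ)..s, ψ t := hle
    have htend : Tendsto (fun s => K * -Bc⁻¹ * ((r₂ - s) ^ Bc - r₂ ^ Bc)) (𝓝[<] r₂) atTop := by
      have h1 : Tendsto (fun s : ℝ => r₂ - s) (𝓝[<] r₂) (𝓝[>] (0:ℝ)) := by
        rw [tendsto_nhdsWithin_iff]
        constructor
        · have h : Tendsto (fun s : ℝ => r₂ - s) (𝓝 r₂) (𝓝 (r₂ - r₂)) :=
            (continuous_const.sub continuous_id).tendsto r₂
          rw [sub_self] at h
          exact h.mono_left nhdsWithin_le_nhds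
        · filter_upwards [self_mem_nhdsWithin] with s hs
          simp only [Set.mem_Iio] at hs
          exact Set.mem_Ioi.2 (by linarith)
      have h2 : Tendsto (fun x : ℝ => x ^ Bc) (𝓝[>] (0:ℝ)) atTop := by
        have h3 : Tendsto (fun x : ℝ => x ^ (-Bc)) (𝓝[>] (0:ℝ)) (𝓝[>] (0:ℝ)) := by
          rw [tendsto_nhdsWithin_iff]
          constructor
          · have h := (Real.continuousAt_rpow_const 0 (-Bc) (Or.inr (by linarith))).tendsto
            rw [Real.zero_rpow (by linarith : -Bc ≠ 0)] at h
            exact h.mono_left nhdsWithin_le_nhds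
          · filter_upwards [self_mem_nhdsWithin] with x hx
            exact Set.mem_Ioi.2 (Real.rpow_pos_of_pos hx _)
        have h4 := h3.inv_tendsto_nhdsGT_zero
        apply h4.congr'
        filter_upwards [self_mem_nhdsWithin] with x hx
        simp only [Pi.inv_apply]
        rw [← Real.rpow_neg (le_of_lt hx), neg_neg]
      have h5 : Tendsto (fun s : ℝ => (r₂ - s) ^ Bc) (𝓝[<] r₂) atTop := h2.comp h1
      have hB' : (0:ℝ) < K * -Bc⁻¹ :=
        mul_pos hK0 (neg_pos.2 (inv_lt_zero.2 hBcneg))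
      have h6 : Tendsto (fun s : ℝ => (r₂ - s) ^ Bc * (K * -Bc⁻¹)) (𝓝[<] r₂) atTop :=
        h5.atTop_mul_const hB'
      have h7 := tendsto_atTop_add_const_right (𝓝[<] r₂) (-(K * -Bc⁻¹ * r₂ ^ Bc)) h6
      apply h7.congr
      intro s; ring
    apply tendsto_atTop_mono' _ ?_ htend
    filter_upwards [Ico_mem_nhdsLT_of_mem (⟨hr₂pos, le_rfl⟩ : r₂ ∈ Set.Ioc 0 r₂)] with s hs
    exact hlow s hs
  -- invert
  obtain ⟨S, hSmem, hS', hSmono, hStop, hSzero⟩ :=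
    invert_T r₂ hr₂pos ψ hcontψ (fun s hs => hψpos s (Set.Ico_subset_Iio_self hs)) hdiv
  -- key algebraic identities
  have hψinv : ∀ s ∈ Set.Iio r₂, (ψ s)⁻¹
      = c * (((r₁ - s) ^ (A - 1))⁻¹ * ((r₂ - s) ^ (Bc - 1))⁻¹) := by
    intro s hs
    rw [hψval, mul_inv, mul_inv, inv_inv]
  have hid2 : ∀ s ∈ Set.Iio r₂, Bf s * (ψ s)⁻¹ = c * (r₁ - s) * (r₂ - s) := by
    intro s hs
    rw [hψinv s hs, hBfval]
    have e1 := rpow_cancel (hX s hs) A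
    have e2 := rpow_cancel (hY s hs) Bc
    calc (r₁ - s) ^ A * (r₂ - s) ^ Bc
          * (c * (((r₁ - s) ^ (A - 1))⁻¹ * ((r₂ - s) ^ (Bc - 1))⁻¹))
        = c * ((r₁ - s) ^ A * ((r₁ - s) ^ (A - 1))⁻¹)
            * ((r₂ - s) ^ Bc * ((r₂ - s) ^ (Bc - 1))⁻¹) := by ring
      _ = c * (r₁ - s) * (r₂ - s) := by rw [e1, e2]
  have hscalar : ∀ s : ℝ, -(A * c) * (r₂ - s) - Bc * c * (r₁ - s) = 2 * p - 3 * q ^ 2 * s := by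
    intro s
    rw [hA, hBc]
    have hD' : (2 : ℝ) * D ≠ 0 := by positivity
    field_simp
    linear_combination (2 * p - 3 * q ^ 2 * s) * hdiff
  have hBf' : ∀ s ∈ Set.Iio r₂, HasDerivAt Bf
      (-(A * ((r₁ - s) ^ (A - 1) * (r₂ - s) ^ Bc))
        - Bc * ((r₁ - s) ^ A * (r₂ - s) ^ (Bc - 1))) s := by
    intro s hs
    have h1 : HasDerivAt (fun u : ℝ => r₁ - u) (-1) s := (hasDerivAt_id s).const_sub r₁
    have h2 : HasDerivAt (fun u : ℝ => r₂ - u) (-1) s := (hasDerivAt_id s).const_sub r₂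
    have h3 := h1.rpow_const (p := A) (Or.inl (hX s hs).ne')
    have h4 := h2.rpow_const (p := Bc) (Or.inl (hY s hs).ne')
    have h5 := h3.mul h4
    rw [hBfd]
    refine h5.congr_deriv ?_
    ring
  have hid1 : ∀ s ∈ Set.Iio r₂,
      (-(A * ((r₁ - s) ^ (A - 1) * (r₂ - s) ^ Bc))
        - Bc * ((r₁ - s) ^ A * (r₂ - s) ^ (Bc - 1))) * (ψ s)⁻¹
      = 2 * p - 3 * q ^ 2 * s := by
    intro s hs
    rw [hψinv s hs]
    have e1 := rpow_cancel (hX s hs) A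
    have e2 := rpow_cancel (hY s hs) Bc
    have e3 : (r₁ - s) ^ (A - 1) * ((r₁ - s) ^ (A - 1))⁻¹ = 1 :=
      mul_inv_cancel₀ (Real.rpow_pos_of_pos (hX s hs) _).ne'
    have e4 : (r₂ - s) ^ (Bc - 1) * ((r₂ - s) ^ (Bc - 1))⁻¹ = 1 :=
      mul_inv_cancel₀ (Real.rpow_pos_of_pos (hY s hs) _).ne'
    calc (-(A * ((r₁ - s) ^ (A - 1) * (r₂ - s) ^ Bc))
        - Bc * ((r₁ - s) ^ A * (r₂ - s) ^ (Bc - 1)))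
          * (c * (((r₁ - s) ^ (A - 1))⁻¹ * ((r₂ - s) ^ (Bc - 1))⁻¹))
        = -(A * c) * ((r₁ - s) ^ (A - 1) * ((r₁ - s) ^ (A - 1))⁻¹)
            * ((r₂ - s) ^ Bc * ((r₂ - s) ^ (Bc - 1))⁻¹)
          - Bc * c * ((r₁ - s) ^ A * ((r₁ - s) ^ (A - 1))⁻¹)
            * ((r₂ - s) ^ (Bc - 1) * ((r₂ - s) ^ (Bc - 1))⁻¹) := by ring
      _ = -(A * c) * (r₂ - s) - Bc * c * (r₁ - s) := by rw [e1, e2, e3, e4]; ring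
      _ = 2 * p - 3 * q ^ 2 * s := hscalar s
  -- construct a, b
  have hbpos : ∀ τ ∈ Set.Ioi (0:ℝ), 0 < Bf (S τ) := fun τ hτ =>
    hBfpos (S τ) (Set.mem_Iio.2 (hSmem τ hτ).2)
  have hratio : ∀ τ ∈ Set.Ioi (0:ℝ), S τ * Bf (S τ) / Bf (S τ) = S τ := fun τ hτ =>
    mul_div_cancel_right₀ _ (hbpos τ hτ).ne'
  have hBfc : ContinuousAt Bf 0 := by
    rw [hBfd]
    apply ContinuousAt.mul
    · exact ((continuous_const.sub continuous_id).continuousAt).rpow_const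
        (Or.inl (show r₁ - 0 ≠ 0 by rw [sub_zero]; exact hr₁pos.ne'))
    · exact ((continuous_const.sub continuous_id).continuousAt).rpow_const
        (Or.inl (show r₂ - 0 ≠ 0 by rw [sub_zero]; exact hr₂pos.ne'))
  have hbL : Tendsto (fun τ => Bf (S τ)) (𝓝[>] (0:ℝ)) (𝓝 (Bf 0)) :=
    hBfc.tendsto.comp hSzero
  refine ⟨0, fun τ => S τ * Bf (S τ), fun τ => Bf (S τ), ?_, ?_, ?_, ?_, ?_, ?_, ?_, ?_⟩
  · intro τ hτ
    exact ⟨mul_pos (hSmem τ hτ).1 (hbpos τ hτ), hbpos τ hτ⟩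
  · intro τ hτ
    have hsIio : S τ ∈ Set.Iio r₂ := Set.mem_Iio.2 (hSmem τ hτ).2
    have hd_b := (hBf' (S τ) hsIio).comp τ (hS' τ hτ)
    have hd_a := (hS' τ hτ).mul hd_b
    have hval : (ψ (S τ))⁻¹ * Bf (S τ)
        + S τ * ((-(A * ((r₁ - S τ) ^ (A - 1) * (r₂ - S τ) ^ Bc))
          - Bc * ((r₁ - S τ) ^ A * (r₂ - S τ) ^ (Bc - 1))) * (ψ (S τ))⁻¹)
        = 4 + 2 * (m:ℝ) * q ^ 2 * (S τ * Bf (S τ)) ^ 2 / (Bf (S τ)) ^ 2 := by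
      rw [mul_comm ((ψ (S τ))⁻¹) (Bf (S τ)), hid2 _ hsIio, hid1 _ hsIio]
      have hb := (hbpos τ hτ).ne'
      have hsq : 2 * (m:ℝ) * q ^ 2 * (S τ * Bf (S τ)) ^ 2 / (Bf (S τ)) ^ 2
          = 2 * (m:ℝ) * q ^ 2 * (S τ) ^ 2 := by
        field_simp
      rw [hsq]
      linear_combination hfact (S τ) + (S τ) ^ 2 * hc
    rw [← hval]
    exact hd_a
  · intro τ hτ
    have hsIio : S τ ∈ Set.Iio r₂ := Set.mem_Iio.2 (hSmem τ hτ).2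
    have hd := (hBf' (S τ) hsIio).comp τ (hS' τ hτ)
    rw [hratio τ hτ, ← hid1 (S τ) hsIio]
    exact hd
  · intro τ hτ
    rw [hratio τ hτ]
    exact ⟨(hSmem τ hτ).1, (hSmem τ hτ).2⟩
  · intro x hx y hy hxy
    simp only
    rw [hratio x hx, hratio y hy]
    exact hSmono hx hy hxy
  · apply hStop.congr'
    filter_upwards [eventually_gt_atTop 0] with τ hτ
    exact (hratio τ hτ).symm
  · have h := hSzero.mul hbL
    rw [zero_mul] at h
    exact h
  · exact ⟨Bf 0, hBfpos 0 (Set.mem_Iio.2 hr₂pos), hbL⟩
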